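/- Let ρ_{AB} = ⊕_a p_a ρ_{A B_a^L} ⊗ ω_{B_a^R} be a state in Koashi–Imoto form on H_A ⊗ (⊕_a H_{B_a^L} ⊗ H_{B_a^R}). Then the mutual information satisfies I(A : B)_ρ = I(A : B^L)_{ℰ(ρ)}, where ℰ is the compression channel ℰ(X) = ⊕_a tr_{B_a^R}(Π_a X Π_a) mapping B to B^L = ⊕_a H_{B_a^L}; i.e., tracing out the B_a^R factors does not change the mutual information with A. -/

import Mathlib

open scoped ComplexOrder

/-- Von Neumann entropy `S(M) = -Σ λᵢ log λᵢ` of a (Hermitian) matrix, via its eigenvalues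
(junk value 0 if `M` is not Hermitian). -/
noncomputable def vNent {n : Type*} [Fintype n] [DecidableEq n] (M : Matrix n n ℂ) : ℝ :=
  if h : M.IsHermitian then -∑ i, h.eigenvalues i * Real.log (h.eigenvalues i) else 0

/-- Partial trace over the second tensor factor. -/
noncomputable def ptraceB {A B : Type*} [Fintype A] [Fintype B]
    (M : Matrix (A × B) (A × B) ℂ) : Matrix A A ℂ :=
  Matrix.of fun i j => ∑ b, M (i, b) (j, b)

/-- Partial trace over the first tensor factor. -/
noncomputable def ptraceA {A B : Type*} [Fintype A] [Fintype B]
    (M : Matrix (A × B) (A × B) ℂ) : Matrix B B ℂ :=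
  Matrix.of fun b c => ∑ i, M (i, b) (i, c)

/-- Mutual information `I(A:B) = S(ρ_A) + S(ρ_B) − S(ρ_{AB})`. -/
noncomputable def mutInfo {A B : Type*} [Fintype A] [Fintype B] [DecidableEq A] [DecidableEq B]
    (M : Matrix (A × B) (A × B) ℂ) : ℝ :=
  vNent (ptraceB M) + vNent (ptraceA M) - vNent M

section Helpers

open Matrix Polynomial Kronecker

lemma charpoly_conj_unit {n : Type*} [Fintype n] [DecidableEq n]
    (W D : Matrix n n ℂ) (hW : W * Wᴴ = 1) :
    (W * D * Wᴴ).charpoly = D.charpoly := by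
  have hmap : (W.map C) * (Wᴴ.map C) = 1 := by
    rw [← Matrix.map_mul, hW]; simp [Matrix.map_one]
  have hch : charmatrix (W * D * Wᴴ) = (W.map C) * charmatrix D * (Wᴴ.map C) := by
    unfold charmatrix
    rw [mul_sub, sub_mul]
    congr 1
    · have h1 : W.map ⇑C * Matrix.scalar n (X : ℂ[X]) = Matrix.scalar n (X : ℂ[X]) * W.map ⇑C :=
        (Matrix.scalar_commute X (fun r => Commute.all X r) (W.map ⇑C)).eq.symm
      rw [h1, mul_assoc, hmap, mul_one]
    · simp only [RingHom.mapMatrix_apply]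
      rw [← Matrix.map_mul, ← Matrix.map_mul]
  unfold Matrix.charpoly
  rw [hch, Matrix.det_mul, Matrix.det_mul, mul_comm, ← mul_assoc,
    mul_comm ((Wᴴ.map ⇑C).det), ← Matrix.det_mul, hmap, Matrix.det_one, one_mul]

lemma charpoly_diagonal' {n : Type*} [Fintype n] [DecidableEq n] (d : n → ℂ) :
    (diagonal d).charpoly = ∏ i, (X - C (d i)) := by
  have : charmatrix (diagonal d) = diagonal (fun i => X - C (d i)) := by
    ext i j
    by_cases h : i = j
    · subst h; simp [charmatrix_apply]
    · simp [charmatrix_apply, diagonal_apply_ne _ h, h]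
  rw [Matrix.charpoly, this, det_diagonal]

lemma roots_prod_X_sub_C' {n : Type*} [Fintype n] (d : n → ℂ) :
    (∏ i, (X - C (d i))).roots = Finset.univ.val.map d := by
  have := Polynomial.roots_multiset_prod_X_sub_C (Finset.univ.val.map d)
  rw [Multiset.map_map] at this
  rw [← this]
  congr 1

lemma charpoly_of_hermitian {n : Type*} [Fintype n] [DecidableEq n]
    {M : Matrix n n ℂ} (hM : M.IsHermitian) :
    M.charpoly = ∏ i, (X - C ((hM.eigenvalues i : ℂ))) := by
  conv_lhs => rw [hM.spectral_theorem, Unitary.conjStarAlgAut_apply]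
  rw [Matrix.star_eq_conjTranspose]
  have hW : (hM.eigenvectorUnitary : Matrix n n ℂ) * (hM.eigenvectorUnitary : Matrix n n ℂ)ᴴ = 1 := by
    rw [← Matrix.star_eq_conjTranspose]
    exact Matrix.mem_unitaryGroup_iff.mp (hM.eigenvectorUnitary).2
  rw [charpoly_conj_unit _ _ hW, charpoly_diagonal']
  rfl

lemma eig_multiset_eq {n m : Type*} [Fintype n] [DecidableEq n] [Fintype m]
    {M : Matrix n n ℂ} (hM : M.IsHermitian) (d : m → ℝ)
    (hch : M.charpoly = ∏ i, (Polynomial.X - Polynomial.C ((d i : ℂ)))) :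
    (Finset.univ.val.map (fun i => ((hM.eigenvalues i : ℂ)))) =
      Finset.univ.val.map (fun i => ((d i : ℂ))) := by
  have h1 := roots_prod_X_sub_C' (fun i => ((hM.eigenvalues i : ℂ)))
  have h2 := roots_prod_X_sub_C' (fun i => ((d i : ℂ)))
  rw [← charpoly_of_hermitian hM] at h1
  rw [← hch] at h2
  rw [← h1, ← h2]

lemma vNent_eq_of_charpoly {n m : Type*} [Fintype n] [DecidableEq n] [Fintype m]
    {M : Matrix n n ℂ} (hM : M.IsHermitian) (d : m → ℝ)
    (hch : M.charpoly = ∏ i, (Polynomial.X - Polynomial.C ((d i : ℂ)))) :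
    vNent M = -∑ i, d i * Real.log (d i) := by
  have key := congrArg (fun s : Multiset ℂ => (s.map (fun z => z.re * Real.log z.re)).sum)
    (eig_multiset_eq hM d hch)
  simp only [Multiset.map_map, Function.comp] at key
  rw [vNent, dif_pos hM, neg_inj]
  calc ∑ i, hM.eigenvalues i * Real.log (hM.eigenvalues i)
      = (Finset.univ.val.map (fun i =>
          ((hM.eigenvalues i : ℂ)).re * Real.log ((hM.eigenvalues i : ℂ)).re)).sum := by
        rw [Finset.sum]; simp
    _ = (Finset.univ.val.map (fun i => ((d i : ℂ)).re * Real.log ((d i : ℂ)).re)).sum := key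
    _ = ∑ i, d i * Real.log (d i) := by rw [Finset.sum]; simp

lemma sum_eigenvalues_eq_trace' {n : Type*} [Fintype n] [DecidableEq n]
    {M : Matrix n n ℂ} (hM : M.IsHermitian) :
    ((∑ i, hM.eigenvalues i : ℝ) : ℂ) = M.trace := by
  conv_rhs => rw [hM.spectral_theorem, Unitary.conjStarAlgAut_apply]
  rw [Matrix.trace_mul_cycle, Unitary.coe_star_mul_self, Matrix.one_mul,
    Matrix.trace_diagonal]
  push_cast
  rfl

lemma main_diag {n ι' : Type*} [Fintype n] [DecidableEq n] [Fintype ι'] [DecidableEq ι']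
    {m : ι' → Type*} [∀ s, Fintype (m s)] [∀ s, DecidableEq (m s)]
    (e : n ≃ Σ s, m s) (U : ∀ s, Matrix (m s) (m s) ℂ)
    (hU : ∀ s, U s * (U s)ᴴ = 1) (d : ∀ s, m s → ℝ)
    (M : Matrix n n ℂ)
    (hM : M = (blockDiagonal'
        (fun s => U s * (diagonal fun i => ((d s i : ℂ))) * (U s)ᴴ)).submatrix e e) :
    M.IsHermitian ∧ vNent M = -∑ s, ∑ i, d s i * Real.log (d s i) := by
  set W : Matrix (Σ s, m s) (Σ s, m s) ℂ := blockDiagonal' U with hWdef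
  set D : Matrix (Σ s, m s) (Σ s, m s) ℂ :=
    blockDiagonal' (fun s => (diagonal fun i => ((d s i : ℂ)))) with hDdef
  have hDdiag : D = diagonal (fun x : Σ s, m s => ((d x.1 x.2 : ℂ))) := by
    rw [hDdef, blockDiagonal'_diagonal]
  have hblock : blockDiagonal'
      (fun s => U s * (diagonal fun i => ((d s i : ℂ))) * (U s)ᴴ) = W * D * Wᴴ := by
    rw [hWdef, hDdef, blockDiagonal'_conjTranspose, ← blockDiagonal'_mul, ← blockDiagonal'_mul]
  have hW : W * Wᴴ = 1 := by
    rw [hWdef, blockDiagonal'_conjTranspose, ← blockDiagonal'_mul]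
    rw [show (fun s => U s * (U s)ᴴ) = fun _ => 1 from funext hU]
    exact blockDiagonal'_one
  have hMre : M = (W * D * Wᴴ).submatrix e e := by rw [hM, hblock]
  have hDH : Dᴴ = D := by
    rw [hDdiag, diagonal_conjTranspose]
    funext x y
    simp only [diagonal_apply, Pi.star_apply, RCLike.star_def, Complex.conj_ofReal, apply_ite,
      map_zero, star_zero]
    split <;> simp [Complex.conj_ofReal]
  have herm : M.IsHermitian := by
    rw [hMre]
    unfold Matrix.IsHermitian
    rw [conjTranspose_submatrix, conjTranspose_mul, conjTranspose_mul, conjTranspose_conjTranspose,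
      hDH, Matrix.mul_assoc]
  have hch : M.charpoly = ∏ x : Σ s, m s, (X - C ((d x.1 x.2 : ℂ))) := by
    have : M = (reindex e.symm e.symm) (W * D * Wᴴ) := by
      rw [hMre]; rfl
    rw [this, charpoly_reindex, charpoly_conj_unit _ _ hW, hDdiag, charpoly_diagonal']
  refine ⟨herm, ?_⟩
  rw [vNent_eq_of_charpoly herm (fun x : Σ s, m s => d x.1 x.2) hch]
  rw [neg_inj]
  rw [← Finset.univ_sigma_univ, Finset.sum_sigma]

lemma kron_conjTranspose {X Y Z W : Type*} (A : Matrix X Y ℂ) (B : Matrix Z W ℂ) :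
    (A ⊗ₖ B)ᴴ = Aᴴ ⊗ₖ Bᴴ := by
  ext ⟨i, j⟩ ⟨k, l⟩
  simp [conjTranspose_apply, kroneckerMap_apply, star_mul', mul_comm]

lemma kron_unitary {X Y : Type*} [Fintype X] [Fintype Y] [DecidableEq X] [DecidableEq Y]
    (U : Matrix X X ℂ) (V : Matrix Y Y ℂ) (hU : U * Uᴴ = 1) (hV : V * Vᴴ = 1) :
    (U ⊗ₖ V) * (U ⊗ₖ V)ᴴ = 1 := by
  rw [kron_conjTranspose, ← mul_kronecker_mul, hU, hV, one_kronecker_one]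

lemma kron_block {X Y : Type*} [Fintype X] [Fintype Y] [DecidableEq X] [DecidableEq Y]
    {P : Matrix X X ℂ} (hP : P.IsHermitian) {Q : Matrix Y Y ℂ} (hQ : Q.IsHermitian) (p : ℝ) :
    ((hP.eigenvectorUnitary : Matrix X X ℂ) ⊗ₖ (hQ.eigenvectorUnitary : Matrix Y Y ℂ)) *
      (diagonal fun xy : X × Y => ((p * (hP.eigenvalues xy.1 * hQ.eigenvalues xy.2) : ℝ) : ℂ)) *
      ((hP.eigenvectorUnitary : Matrix X X ℂ) ⊗ₖ (hQ.eigenvectorUnitary : Matrix Y Y ℂ))ᴴ =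
    (p : ℂ) • (P ⊗ₖ Q) := by
  have hd : (diagonal fun xy : X × Y =>
      ((p * (hP.eigenvalues xy.1 * hQ.eigenvalues xy.2) : ℝ) : ℂ)) =
      (p : ℂ) • ((diagonal fun x => ((hP.eigenvalues x : ℂ))) ⊗ₖ
        (diagonal fun y => ((hQ.eigenvalues y : ℂ)))) := by
    rw [diagonal_kronecker_diagonal, ← diagonal_smul]
    refine congrArg diagonal (funext fun xy => ?_)
    simp only [Pi.smul_apply, smul_eq_mul]
    push_cast
    ring
  rw [hd, Matrix.mul_smul, Matrix.smul_mul, kron_conjTranspose, ← mul_kronecker_mul,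
    ← mul_kronecker_mul]
  conv_rhs => rw [hP.spectral_theorem, hQ.spectral_theorem, Unitary.conjStarAlgAut_apply,
    Unitary.conjStarAlgAut_apply]
  simp only [Unitary.coe_star, Matrix.star_eq_conjTranspose]
  rfl

lemma unit_block {X : Type*} [Fintype X] [DecidableEq X]
    {P : Matrix X X ℂ} (hP : P.IsHermitian) (p : ℝ) :
    (hP.eigenvectorUnitary : Matrix X X ℂ) *
      (diagonal fun x : X => ((p * hP.eigenvalues x : ℝ) : ℂ)) *
      (hP.eigenvectorUnitary : Matrix X X ℂ)ᴴ = (p : ℂ) • P := by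
  have hd : (diagonal fun x : X => ((p * hP.eigenvalues x : ℝ) : ℂ)) =
      (p : ℂ) • (diagonal fun x => ((hP.eigenvalues x : ℂ))) := by
    rw [← diagonal_smul]
    refine congrArg diagonal (funext fun x => ?_)
    simp only [Pi.smul_apply, smul_eq_mul]
    push_cast
    ring
  rw [hd, Matrix.mul_smul, Matrix.smul_mul]
  congr 1
  conv_rhs => rw [hP.spectral_theorem, Unitary.conjStarAlgAut_apply]
  rw [Matrix.star_eq_conjTranspose]
  rfl

lemma mem_unitary_mul_conjT {X : Type*} [Fintype X] [DecidableEq X]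
    (U : Matrix.unitaryGroup X ℂ) : (U : Matrix X X ℂ) * (U : Matrix X X ℂ)ᴴ = 1 := by
  rw [← Matrix.star_eq_conjTranspose]
  exact Matrix.mem_unitaryGroup_iff.mp U.2

lemma xlogx_mul (s u : ℝ) :
    (s * u) * Real.log (s * u) = s * (u * Real.log u) + u * (s * Real.log s) := by
  rcases eq_or_ne s 0 with rfl | hs
  · simp
  rcases eq_or_ne u 0 with rfl | hu
  · simp
  rw [Real.log_mul hs hu]
  ring

lemma sum_xlogx_prod {X Y : Type*} [Fintype X] [Fintype Y] (c : ℝ) (s : X → ℝ) (u : Y → ℝ)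
    (hs : ∑ x, s x = c) (hu : ∑ y, u y = 1) :
    ∑ xy : X × Y, (s xy.1 * u xy.2) * Real.log (s xy.1 * u xy.2) =
      (∑ x, s x * Real.log (s x)) + c * ∑ y, u y * Real.log (u y) := by
  rw [Fintype.sum_prod_type]
  have step : ∀ x : X, ∑ y, (s x * u y) * Real.log (s x * u y) =
      s x * (∑ y, u y * Real.log (u y)) + s x * Real.log (s x) := by
    intro x
    simp only [xlogx_mul, Finset.sum_add_distrib, ← Finset.mul_sum, ← Finset.sum_mul, hu, one_mul]
  simp only [step, Finset.sum_add_distrib, ← Finset.sum_mul, hs]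
  ring

end Helpers


section Main

open scoped ComplexOrder
open Matrix Kronecker

def eqv1 (A : Type*) {ι : Type*} (BL BR : ι → Type*) :
    (A × Σ a, BL a × BR a) ≃ Σ a, (A × BL a) × BR a :=
  ⟨fun x => ⟨x.2.1, ((x.1, x.2.2.1), x.2.2.2)⟩, fun y => (y.2.1.1, ⟨y.1, (y.2.1.2, y.2.2)⟩),
    fun ⟨_, ⟨_, _, _⟩⟩ => rfl, fun ⟨_, ⟨⟨_, _⟩, _⟩⟩ => rfl⟩

def eqv2 (A : Type*) {ι : Type*} (BL : ι → Type*) :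
    (A × Σ a, BL a) ≃ Σ a, A × BL a :=
  ⟨fun x => ⟨x.2.1, (x.1, x.2.2)⟩, fun y => (y.2.1, ⟨y.1, y.2.2⟩),
    fun ⟨_, ⟨_, _⟩⟩ => rfl, fun ⟨_, _, _⟩ => rfl⟩

theorem stmt9
    (ι : Type*) [Fintype ι] [DecidableEq ι]
    (A : Type*) [Fintype A] [DecidableEq A]
    (BL BR : ι → Type*) [∀ a, Fintype (BL a)] [∀ a, Fintype (BR a)]
    [∀ a, DecidableEq (BL a)] [∀ a, DecidableEq (BR a)]
    (p : ι → ℝ) (hp : ∀ a, 0 ≤ p a) (hp1 : ∑ a, p a = 1)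
    (ρA : (a : ι) → Matrix (A × BL a) (A × BL a) ℂ)
    (hρA : ∀ a, (ρA a).PosSemidef ∧ (ρA a).trace = 1)
    (ω : (a : ι) → Matrix (BR a) (BR a) ℂ)
    (hω : ∀ a, (ω a).PosSemidef ∧ (ω a).trace = 1)
    (ρ : Matrix (A × Σ a, BL a × BR a) (A × Σ a, BL a × BR a) ℂ)
    (hρ : ∀ (i j : A) (u v : Σ a, BL a × BR a),
      ρ (i, u) (j, v) = if h : u.1 = v.1 then
        (p u.1 : ℂ) * ρA u.1 (i, u.2.1) (j, cast (congrArg BL h.symm) v.2.1)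
          * ω u.1 u.2.2 (cast (congrArg BR h.symm) v.2.2)
      else 0)
    (E : Matrix (A × Σ a, BL a × BR a) (A × Σ a, BL a × BR a) ℂ →
      Matrix (A × Σ a, BL a) (A × Σ a, BL a) ℂ)
    (hE : ∀ X (i j : A) (s t : Σ a, BL a),
      E X (i, s) (j, t) = if h : s.1 = t.1 then
        ∑ r : BR s.1, X (i, ⟨s.1, (s.2, r)⟩) (j, ⟨t.1, (t.2, cast (congrArg BR h) r)⟩)
      else 0) :
    mutInfo ρ = mutInfo (E ρ) := by
  classical
  -- basic data
  have h1 : ∀ a, (ρA a).IsHermitian := fun a => (hρA a).1.1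
  have h2 : ∀ a, (ω a).IsHermitian := fun a => (hω a).1.1
  set σ : (a : ι) → Matrix (BL a) (BL a) ℂ := fun a => ptraceA (ρA a) with hσdef
  have hσ : ∀ a, (σ a).IsHermitian := by
    intro a
    unfold Matrix.IsHermitian
    funext l l'
    simp only [hσdef, conjTranspose_apply, ptraceA, of_apply, star_sum]
    refine Finset.sum_congr rfl fun i _ => ?_
    rw [← conjTranspose_apply, (h1 a).eq]
  have trσ : ∀ a, (σ a).trace = 1 := by
    intro a
    rw [show (σ a).trace = (ρA a).trace from ?_, (hρA a).2]
    rw [Matrix.trace, Matrix.trace]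
    simp only [hσdef, diag_apply, ptraceA, of_apply]
    rw [Finset.sum_comm]
    conv_rhs => rw [Fintype.sum_prod_type]
  have trω : ∀ a, ∑ r : BR a, ω a r r = 1 := fun a => (hω a).2
  -- eigenvalue sums
  have sumL : ∀ a, ∑ x, (h1 a).eigenvalues x = 1 := by
    intro a
    have := sum_eigenvalues_eq_trace' (h1 a)
    rw [(hρA a).2] at this
    exact_mod_cast this
  have sumM : ∀ a, ∑ y, (h2 a).eigenvalues y = 1 := by
    intro a
    have := sum_eigenvalues_eq_trace' (h2 a)
    rw [(hω a).2] at this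
    exact_mod_cast this
  have sumK : ∀ a, ∑ l, (hσ a).eigenvalues l = 1 := by
    intro a
    have := sum_eigenvalues_eq_trace' (hσ a)
    rw [trσ a] at this
    exact_mod_cast this
  -- (1) vNent ρ
  have hρform : ρ = (blockDiagonal' (fun a =>
      (((h1 a).eigenvectorUnitary : Matrix (A × BL a) (A × BL a) ℂ) ⊗ₖ
        ((h2 a).eigenvectorUnitary : Matrix (BR a) (BR a) ℂ)) *
      (diagonal fun xy : (A × BL a) × BR a =>
        ((p a * ((h1 a).eigenvalues xy.1 * (h2 a).eigenvalues xy.2) : ℝ) : ℂ)) *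
      (((h1 a).eigenvectorUnitary : Matrix (A × BL a) (A × BL a) ℂ) ⊗ₖ
        ((h2 a).eigenvectorUnitary : Matrix (BR a) (BR a) ℂ))ᴴ)).submatrix (eqv1 A BL BR) (eqv1 A BL BR) := by
    have hb : ∀ a : ι, _ = _ := fun a => kron_block (h1 a) (h2 a) (p a)
    rw [funext hb]
    funext x y
    obtain ⟨i, a, l, r⟩ := x
    obtain ⟨j, a', l', r'⟩ := y
    rw [Matrix.submatrix_apply]
    have hx : ⇑(eqv1 A BL BR) (i, ⟨a, (l, r)⟩) = ⟨a, ((i, l), r)⟩ := rfl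
    have hy : ⇑(eqv1 A BL BR) (j, ⟨a', (l', r')⟩) = ⟨a', ((j, l'), r')⟩ := rfl
    rw [hx, hy, hρ i j ⟨a, (l, r)⟩ ⟨a', (l', r')⟩]
    rcases eq_or_ne a a' with rfl | hne
    · rw [blockDiagonal'_apply_eq, dif_pos rfl]
      simp only [cast_eq, Matrix.smul_apply, kroneckerMap_apply, smul_eq_mul]
      ring
    · rw [blockDiagonal'_apply_ne _ _ _ hne, dif_neg hne]
  obtain ⟨hρH, hρent⟩ := main_diag (eqv1 A BL BR) _
    (fun a => kron_unitary _ _ (mem_unitary_mul_conjT _) (mem_unitary_mul_conjT _))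
    (fun a xy => p a * ((h1 a).eigenvalues xy.1 * (h2 a).eigenvalues xy.2)) ρ hρform
  -- (2) vNent (E ρ)
  have hEform : E ρ = (blockDiagonal' (fun a =>
      ((h1 a).eigenvectorUnitary : Matrix (A × BL a) (A × BL a) ℂ) *
      (diagonal fun x : A × BL a => ((p a * (h1 a).eigenvalues x : ℝ) : ℂ)) *
      ((h1 a).eigenvectorUnitary : Matrix (A × BL a) (A × BL a) ℂ)ᴴ)).submatrix (eqv2 A BL) (eqv2 A BL) := by
    have hb : ∀ a : ι, _ = _ := fun a => unit_block (h1 a) (p a)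
    rw [funext hb]
    funext x y
    obtain ⟨i, a, l⟩ := x
    obtain ⟨j, a', l'⟩ := y
    rw [Matrix.submatrix_apply]
    have hx : ⇑(eqv2 A BL) (i, ⟨a, l⟩) = ⟨a, (i, l)⟩ := rfl
    have hy : ⇑(eqv2 A BL) (j, ⟨a', l'⟩) = ⟨a', (j, l')⟩ := rfl
    rw [hx, hy, hE ρ i j ⟨a, l⟩ ⟨a', l'⟩]
    rcases eq_or_ne a a' with rfl | hne
    · rw [blockDiagonal'_apply_eq, dif_pos rfl]
      simp only [cast_eq]
      have : ∀ r : BR a, ρ (i, ⟨a, (l, r)⟩) (j, ⟨a, (l', r)⟩) =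
          (p a : ℂ) * ρA a (i, l) (j, l') * ω a r r := by
        intro r
        rw [hρ i j ⟨a, (l, r)⟩ ⟨a, (l', r)⟩, dif_pos rfl]
        simp
      rw [Finset.sum_congr rfl fun r _ => this r]
      rw [← Finset.mul_sum, trω a, mul_one]
      simp [Matrix.smul_apply, smul_eq_mul]
    · rw [blockDiagonal'_apply_ne _ _ _ hne, dif_neg hne]
  obtain ⟨hEH, hEent⟩ := main_diag (eqv2 A BL) _
    (fun a => mem_unitary_mul_conjT _)
    (fun a x => p a * (h1 a).eigenvalues x) (E ρ) hEform
  -- (3) vNent (ptraceA ρ)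
  have hBform : ptraceA ρ = (blockDiagonal' (fun a =>
      (((hσ a).eigenvectorUnitary : Matrix (BL a) (BL a) ℂ) ⊗ₖ
        ((h2 a).eigenvectorUnitary : Matrix (BR a) (BR a) ℂ)) *
      (diagonal fun lr : BL a × BR a =>
        ((p a * ((hσ a).eigenvalues lr.1 * (h2 a).eigenvalues lr.2) : ℝ) : ℂ)) *
      (((hσ a).eigenvectorUnitary : Matrix (BL a) (BL a) ℂ) ⊗ₖ
        ((h2 a).eigenvectorUnitary : Matrix (BR a) (BR a) ℂ))ᴴ)).submatrix (Equiv.refl (Σ a, BL a × BR a)) (Equiv.refl (Σ a, BL a × BR a)) := by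
    have hb : ∀ a : ι, _ = _ := fun a => kron_block (hσ a) (h2 a) (p a)
    rw [funext hb]
    funext x y
    obtain ⟨a, l, r⟩ := x
    obtain ⟨a', l', r'⟩ := y
    rw [Matrix.submatrix_apply]
    have hx : ⇑(Equiv.refl (Σ a, BL a × BR a)) ⟨a, (l, r)⟩ = ⟨a, (l, r)⟩ := rfl
    have hy : ⇑(Equiv.refl (Σ a, BL a × BR a)) ⟨a', (l', r')⟩ = ⟨a', (l', r')⟩ := rfl
    rw [hx, hy]
    simp only [ptraceA, Matrix.of_apply]
    rcases eq_or_ne a a' with rfl | hne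
    · rw [blockDiagonal'_apply_eq]
      have : ∀ i : A, ρ (i, ⟨a, (l, r)⟩) (i, ⟨a, (l', r')⟩) =
          (p a : ℂ) * ρA a (i, l) (i, l') * ω a r r' := by
        intro i
        rw [hρ i i ⟨a, (l, r)⟩ ⟨a, (l', r')⟩, dif_pos rfl]
        simp
      rw [Finset.sum_congr rfl fun i _ => this i]
      simp only [Matrix.smul_apply, kroneckerMap_apply, smul_eq_mul]
      show _ = (p a : ℂ) * (σ a l l' * ω a r r')
      simp only [hσdef, ptraceA, of_apply, Finset.mul_sum, Finset.sum_mul]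
      refine Finset.sum_congr rfl fun i _ => ?_
      ring
    · rw [blockDiagonal'_apply_ne _ _ _ hne]
      rw [Finset.sum_congr rfl fun i _ => ?_, Finset.sum_const_zero]
      rw [hρ i i ⟨a, (l, r)⟩ ⟨a', (l', r')⟩, dif_neg hne]
  obtain ⟨hBH, hBent⟩ := main_diag (Equiv.refl (Σ a, BL a × BR a)) _
    (fun a => kron_unitary _ _ (mem_unitary_mul_conjT _) (mem_unitary_mul_conjT _))
    (fun a lr => p a * ((hσ a).eigenvalues lr.1 * (h2 a).eigenvalues lr.2)) (ptraceA ρ) hBform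
  -- (4) vNent (ptraceA (E ρ))
  have hBLform : ptraceA (E ρ) = (blockDiagonal' (fun a =>
      ((hσ a).eigenvectorUnitary : Matrix (BL a) (BL a) ℂ) *
      (diagonal fun l : BL a => ((p a * (hσ a).eigenvalues l : ℝ) : ℂ)) *
      ((hσ a).eigenvectorUnitary : Matrix (BL a) (BL a) ℂ)ᴴ)).submatrix (Equiv.refl (Σ a, BL a)) (Equiv.refl (Σ a, BL a)) := by
    have hb : ∀ a : ι, _ = _ := fun a => unit_block (hσ a) (p a)
    rw [funext hb]
    funext x y
    obtain ⟨a, l⟩ := x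
    obtain ⟨a', l'⟩ := y
    rw [Matrix.submatrix_apply]
    have hx : ⇑(Equiv.refl (Σ a, BL a)) ⟨a, l⟩ = ⟨a, l⟩ := rfl
    have hy : ⇑(Equiv.refl (Σ a, BL a)) ⟨a', l'⟩ = ⟨a', l'⟩ := rfl
    rw [hx, hy]
    simp only [ptraceA, Matrix.of_apply]
    rcases eq_or_ne a a' with rfl | hne
    · rw [blockDiagonal'_apply_eq]
      have : ∀ i : A, E ρ (i, ⟨a, l⟩) (i, ⟨a, l'⟩) = (p a : ℂ) * ρA a (i, l) (i, l') := by
        intro i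
        rw [hE ρ i i ⟨a, l⟩ ⟨a, l'⟩, dif_pos rfl]
        simp only [cast_eq]
        have h' : ∀ r : BR a, ρ (i, ⟨a, (l, r)⟩) (i, ⟨a, (l', r)⟩) =
            (p a : ℂ) * ρA a (i, l) (i, l') * ω a r r := by
          intro r
          rw [hρ i i ⟨a, (l, r)⟩ ⟨a, (l', r)⟩, dif_pos rfl]
          simp
        rw [Finset.sum_congr rfl fun r _ => h' r, ← Finset.mul_sum, trω a, mul_one]
      rw [Finset.sum_congr rfl fun i _ => this i]
      simp only [Matrix.smul_apply, smul_eq_mul]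
      show _ = (p a : ℂ) * σ a l l'
      simp only [hσdef, ptraceA, of_apply, Finset.mul_sum]
    · rw [blockDiagonal'_apply_ne _ _ _ hne]
      rw [Finset.sum_congr rfl fun i _ => ?_, Finset.sum_const_zero]
      rw [hE ρ i i ⟨a, l⟩ ⟨a', l'⟩, dif_neg hne]
  obtain ⟨hBLH, hBLent⟩ := main_diag (Equiv.refl (Σ a, BL a)) _
    (fun a => mem_unitary_mul_conjT _)
    (fun a l => p a * (hσ a).eigenvalues l) (ptraceA (E ρ)) hBLform
  -- ptraceB equality
  have hptB : ptraceB ρ = ptraceB (E ρ) := by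
    funext i j
    show ∑ u : Σ a, BL a × BR a, ρ (i, u) (j, u) = ∑ s : Σ a, BL a, E ρ (i, s) (j, s)
    have rhs : ∀ s : Σ a, BL a, E ρ (i, s) (j, s) =
        ∑ r : BR s.1, ρ (i, ⟨s.1, (s.2, r)⟩) (j, ⟨s.1, (s.2, r)⟩) := by
      intro s
      rw [hE ρ i j s s, dif_pos rfl]
      simp
    rw [Finset.sum_congr rfl fun s _ => rhs s]
    conv_lhs => rw [← Finset.univ_sigma_univ, Finset.sum_sigma]
    conv_rhs => rw [← Finset.univ_sigma_univ, Finset.sum_sigma]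
    refine Finset.sum_congr rfl fun a _ => ?_
    rw [Fintype.sum_prod_type]
  -- arithmetic
  have keyρ : ∀ a : ι, ∑ xy : (A × BL a) × BR a,
      (p a * ((h1 a).eigenvalues xy.1 * (h2 a).eigenvalues xy.2)) *
        Real.log (p a * ((h1 a).eigenvalues xy.1 * (h2 a).eigenvalues xy.2)) =
      (∑ x, (p a * (h1 a).eigenvalues x) * Real.log (p a * (h1 a).eigenvalues x)) +
        p a * ∑ y, (h2 a).eigenvalues y * Real.log ((h2 a).eigenvalues y) := by
    intro a
    have := sum_xlogx_prod (p a) (fun x => p a * (h1 a).eigenvalues x) ((h2 a).eigenvalues)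
      (by rw [← Finset.mul_sum, sumL a, mul_one]) (sumM a)
    simp only [mul_assoc] at this ⊢
    exact this
  have keyB : ∀ a : ι, ∑ lr : BL a × BR a,
      (p a * ((hσ a).eigenvalues lr.1 * (h2 a).eigenvalues lr.2)) *
        Real.log (p a * ((hσ a).eigenvalues lr.1 * (h2 a).eigenvalues lr.2)) =
      (∑ l, (p a * (hσ a).eigenvalues l) * Real.log (p a * (hσ a).eigenvalues l)) +
        p a * ∑ y, (h2 a).eigenvalues y * Real.log ((h2 a).eigenvalues y) := by
    intro a
    have := sum_xlogx_prod (p a) (fun l => p a * (hσ a).eigenvalues l) ((h2 a).eigenvalues)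
      (by rw [← Finset.mul_sum, sumK a, mul_one]) (sumM a)
    simp only [mul_assoc] at this ⊢
    exact this
  unfold mutInfo
  rw [hptB, hρent, hEent, hBent, hBLent]
  simp only [keyρ, keyB, Finset.sum_add_distrib]
  ring


end Main
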